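/- Assume ρ(ε) < 1. Let Δĝ₁ : ℝ × E₁ × E₂ → E₁ and Δĝ₂ : ℝ × E₁ × E₂ → E₂ be functions with t ↦ Δĝᵢ(t,u,v) measurable for each (u,v), ‖Δĝᵢ(t,u₁,v₁) − Δĝᵢ(t,u₂,v₂)‖ ≤ K(‖u₁−u₂‖+‖v₁−v₂‖) for all t, and Δĝᵢ(t,0,0) = 0 for all t. Let ψ = (u, v) ∈ C_β^+(E₁ × E₂) satisfy, for all t ≥ 0, u(t) = −∫_t^{+∞} exp((t−s)S) Δĝ₁(s, u(s), v(s)) ds and v(t) = exp((t/ε)F)·v(0) + (1/ε)∫₀^t exp(((t−s)/ε)F) Δĝ₂(s, u(s), v(s)) ds. Then ‖ψ‖_{C_β^+} ≤ ‖v(0)‖/(1 − ρ(ε)); in particular ‖(u(t), v(t))‖ ≤ e^{−(γ/ε)t}·‖v(0)‖/(1 − ρ(ε)) for all t ≥ 0. -/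

import Mathlib

open MeasureTheory Real Filter

noncomputable section

/-- Weighted sup-norm `sup_{t ≤ 0} e^{-β t} ‖φ t‖` on `(-∞,0]`. -/
def negNorm {E : Type*} [NormedAddCommGroup E] (β : ℝ) (φ : ℝ → E) : ℝ :=
  ⨆ t : Set.Iic (0 : ℝ), Real.exp (-β * t.1) * ‖φ t.1‖

/-- Membership in the Banach space `C_β^-(E)` of continuous functions on `(-∞,0]`
with finite weighted sup-norm. -/
def MemCneg {E : Type*} [NormedAddCommGroup E] (β : ℝ) (φ : ℝ → E) : Prop :=
  ContinuousOn φ (Set.Iic 0) ∧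
    BddAbove (Set.range fun t : Set.Iic (0 : ℝ) => Real.exp (-β * t.1) * ‖φ t.1‖)

/-- Weighted sup-norm `sup_{t ≥ 0} e^{-β t} ‖φ t‖` on `[0,∞)`. -/
def posNorm {E : Type*} [NormedAddCommGroup E] (β : ℝ) (φ : ℝ → E) : ℝ :=
  ⨆ t : Set.Ici (0 : ℝ), Real.exp (-β * t.1) * ‖φ t.1‖

/-- Membership in the Banach space `C_β^+(E)` of continuous functions on `[0,∞)`
with finite weighted sup-norm. -/
def MemCpos {E : Type*} [NormedAddCommGroup E] (β : ℝ) (φ : ℝ → E) : Prop :=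
  ContinuousOn φ (Set.Ici 0) ∧
    BddAbove (Set.range fun t : Set.Ici (0 : ℝ) => Real.exp (-β * t.1) * ‖φ t.1‖)

variable {E₁ E₂ : Type*}
  [NormedAddCommGroup E₁] [NormedSpace ℝ E₁]
  [NormedAddCommGroup E₂] [NormedSpace ℝ E₂]

open Topology in
private lemma intExpIoi {b : ℝ} (hb : 0 < b) (t : ℝ) :
    ∫ s in Set.Ioi t, Real.exp (-b * s) = Real.exp (-b * t) / b := by
  have hderiv : ∀ x ∈ Set.Ici t, HasDerivAt (fun s : ℝ => -Real.exp (-b * s) / b)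
      (Real.exp (-b * x)) x := by
    intro x _
    have h1 : HasDerivAt (fun s : ℝ => -b * s) (-b) x := by
      simpa using (hasDerivAt_id x).const_mul (-b)
    have h2 := (Real.hasDerivAt_exp (-b * x)).comp x h1
    have h3 := (h2.neg).div_const b
    exact h3.congr_deriv (by rw [mul_neg, neg_neg, mul_div_assoc, div_self hb.ne', mul_one])
  have hint : IntegrableOn (fun s : ℝ => Real.exp (-b * s)) (Set.Ioi t) :=
    exp_neg_integrableOn_Ioi t hb
  have htend : Tendsto (fun s : ℝ => -Real.exp (-b * s) / b) atTop (𝓝 0) := by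
    have h1 : Tendsto (fun s : ℝ => Real.exp (-b * s)) atTop (𝓝 0) :=
      Real.tendsto_exp_atBot.comp (tendsto_id.const_mul_atTop_of_neg (by linarith))
    simpa using (h1.neg).div_const b
  have := integral_Ioi_of_hasDerivAt_of_tendsto' hderiv hint htend
  rw [this]; ring

private lemma intExpMul {c : ℝ} (hc : c ≠ 0) (t : ℝ) :
    ∫ s in (0:ℝ)..t, Real.exp (c * s) = (Real.exp (c * t) - 1) / c := by
  have hderiv : ∀ x ∈ Set.uIcc (0:ℝ) t, HasDerivAt (fun s : ℝ => Real.exp (c * s) / c)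
      (Real.exp (c * x)) x := by
    intro x _
    have h1 : HasDerivAt (fun s : ℝ => c * s) c x := by
      simpa using (hasDerivAt_id x).const_mul c
    have h2 := ((Real.hasDerivAt_exp (c * x)).comp x h1).div_const c
    exact h2.congr_deriv (mul_div_cancel_right₀ _ hc)
  have hint : IntervalIntegrable (fun s : ℝ => Real.exp (c * s)) volume 0 t :=
    (Real.continuous_exp.comp (continuous_const.mul continuous_id)).intervalIntegrable 0 t
  rw [intervalIntegral.integral_eq_sub_of_hasDerivAt hderiv hint]
  rw [mul_zero, Real.exp_zero, sub_div]

/-- Slow component of the Lyapunov–Perron operator `I^ε_{x₀}`. -/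
def LPslow (S : E₁ →L[ℝ] E₁) (g1 : ℝ → E₁ → E₂ → E₁) (x0 : E₁)
    (x : ℝ → E₁) (y : ℝ → E₂) (t : ℝ) : E₁ :=
  NormedSpace.exp (t • S) x0 +
    ∫ s in (0:ℝ)..t, NormedSpace.exp ((t - s) • S) (g1 s (x s) (y s))

/-- Fast component of the Lyapunov–Perron operator `I^ε_{x₀}`. -/
def LPfast (F : E₂ →L[ℝ] E₂) (g2 : ℝ → E₁ → E₂ → E₂) (ε : ℝ)
    (x : ℝ → E₁) (y : ℝ → E₂) (t : ℝ) : E₂ :=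
  (1/ε) • ∫ s in Set.Iic t, NormedSpace.exp (((t - s)/ε) • F) (g2 s (x s) (y s))

/-- A priori bound for a `C_β^+` fixed point of the tracking operator:
`‖ψ‖_{C_β^+} ≤ ‖v(0)‖/(1-ρ(ε))`, hence pointwise exponential decay. -/
theorem tracking_fixed_point_bound
    {E₁ E₂ : Type*}
    [NormedAddCommGroup E₁] [NormedSpace ℝ E₁] [FiniteDimensional ℝ E₁] [MeasurableSpace E₁] [BorelSpace E₁]
    [NormedAddCommGroup E₂] [NormedSpace ℝ E₂] [FiniteDimensional ℝ E₂] [MeasurableSpace E₂] [BorelSpace E₂]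
    (S : E₁ →L[ℝ] E₁) (F : E₂ →L[ℝ] E₂)
    (γs γf γ K ε : ℝ)
    (hγs : 0 < γs) (hγf : γf < 0) (hγ : 0 < γ) (hK : 0 < K)
    (hgap : K < -(γ + γf)) (hε : 0 < ε)
    (hS : ∀ t ≤ (0:ℝ), ∀ x : E₁, ‖NormedSpace.exp (t • S) x‖ ≤ Real.exp (γs * t) * ‖x‖)
    (hF : ∀ t ≥ (0:ℝ), ∀ y : E₂, ‖NormedSpace.exp (t • F) y‖ ≤ Real.exp (γf * t) * ‖y‖)
    (hρ : (ε * K / (γ + ε * γs) - K / (γ + γf)) < 1)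
    (Δg1 : ℝ → E₁ → E₂ → E₁) (Δg2 : ℝ → E₁ → E₂ → E₂)
    (hm1 : ∀ u v, Measurable fun t => Δg1 t u v)
    (hm2 : ∀ u v, Measurable fun t => Δg2 t u v)
    (hl1 : ∀ t u₁ v₁ u₂ v₂, ‖Δg1 t u₁ v₁ - Δg1 t u₂ v₂‖ ≤ K * (‖u₁ - u₂‖ + ‖v₁ - v₂‖))
    (hl2 : ∀ t u₁ v₁ u₂ v₂, ‖Δg2 t u₁ v₁ - Δg2 t u₂ v₂‖ ≤ K * (‖u₁ - u₂‖ + ‖v₁ - v₂‖))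
    (h01 : ∀ t, Δg1 t 0 0 = 0) (h02 : ∀ t, Δg2 t 0 0 = 0)
    (u : ℝ → E₁) (v : ℝ → E₂)
    (hmem : MemCpos (-γ/ε) u ∧ MemCpos (-γ/ε) v)
    (hfp : ∀ t ≥ (0:ℝ),
      u t = -∫ s in Set.Ici t, NormedSpace.exp ((t - s) • S) (Δg1 s (u s) (v s)) ∧
      v t = NormedSpace.exp ((t/ε) • F) (v 0) +
        (1/ε) • ∫ s in (0:ℝ)..t, NormedSpace.exp (((t - s)/ε) • F) (Δg2 s (u s) (v s))) :
    posNorm (-γ/ε) u + posNorm (-γ/ε) v ≤ ‖v 0‖ / (1 - (ε * K / (γ + ε * γs) - K / (γ + γf))) ∧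
    ∀ t ≥ (0:ℝ), ‖u t‖ + ‖v t‖ ≤
      Real.exp (-(γ/ε) * t) * (‖v 0‖ / (1 - (ε * K / (γ + ε * γs) - K / (γ + γf))))  := by
  have hεne : ε ≠ 0 := ne_of_gt hε
  have hγγf : γ + γf < 0 := by linarith
  have hγγfne : γ + γf ≠ 0 := ne_of_lt hγγf
  have hden : 0 < γ + ε * γs := by positivity
  obtain ⟨⟨hucont, hubdd⟩, ⟨hvcont, hvbdd⟩⟩ := hmem
  haveI : Nonempty (Set.Ici (0:ℝ)) := ⟨⟨0, Set.self_mem_Ici⟩⟩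
  obtain ⟨β, hβdef⟩ : ∃ x : ℝ, x = γ / ε := ⟨_, rfl⟩
  have hβpos : 0 < β := hβdef ▸ div_pos hγ hε
  obtain ⟨Nu, hNudef⟩ : ∃ x : ℝ, x = posNorm (-γ/ε) u := ⟨_, rfl⟩
  obtain ⟨Nv, hNvdef⟩ : ∃ x : ℝ, x = posNorm (-γ/ε) v := ⟨_, rfl⟩
  have hNuSup : Nu = ⨆ t : Set.Ici (0:ℝ), Real.exp (-(-γ/ε) * t.1) * ‖u t.1‖ := hNudef
  have hNvSup : Nv = ⨆ t : Set.Ici (0:ℝ), Real.exp (-(-γ/ε) * t.1) * ‖v t.1‖ := hNvdef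
  have hwu : ∀ s : Set.Ici (0:ℝ), Real.exp (-(-γ/ε) * s.1) * ‖u s.1‖ ≤ Nu := by
    intro s; rw [hNuSup]; exact le_ciSup hubdd s
  have hwv : ∀ s : Set.Ici (0:ℝ), Real.exp (-(-γ/ε) * s.1) * ‖v s.1‖ ≤ Nv := by
    intro s; rw [hNvSup]; exact le_ciSup hvbdd s
  have hwarg : ∀ s : ℝ, -(-γ/ε) * s = β * s := by intro s; rw [hβdef]; ring
  have key_u : ∀ s, 0 ≤ s → ‖u s‖ ≤ Nu * Real.exp (-(β * s)) := by
    intro s hs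
    have h1 := hwu ⟨s, hs⟩
    rw [hwarg s] at h1
    have h3 := mul_le_mul_of_nonneg_left h1 (Real.exp_pos (-(β * s))).le
    have hmul : Real.exp (-(β * s)) * Real.exp (β * s) = 1 := by
      rw [← Real.exp_add, neg_add_cancel, Real.exp_zero]
    rw [← mul_assoc, hmul, one_mul] at h3
    linarith [h3]
  have key_v : ∀ s, 0 ≤ s → ‖v s‖ ≤ Nv * Real.exp (-(β * s)) := by
    intro s hs
    have h1 := hwv ⟨s, hs⟩
    rw [hwarg s] at h1
    have h3 := mul_le_mul_of_nonneg_left h1 (Real.exp_pos (-(β * s))).le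
    have hmul : Real.exp (-(β * s)) * Real.exp (β * s) = 1 := by
      rw [← Real.exp_add, neg_add_cancel, Real.exp_zero]
    rw [← mul_assoc, hmul, one_mul] at h3
    linarith [h3]
  have hNu0 : 0 ≤ Nu := le_trans (by positivity) (hwu ⟨0, Set.self_mem_Ici⟩)
  have hNv0 : 0 ≤ Nv := le_trans (by positivity) (hwv ⟨0, Set.self_mem_Ici⟩)
  have hg1bd : ∀ s, 0 ≤ s → ‖Δg1 s (u s) (v s)‖ ≤ K * ((Nu + Nv) * Real.exp (-(β * s))) := by
    intro s hs
    calc ‖Δg1 s (u s) (v s)‖ = ‖Δg1 s (u s) (v s) - Δg1 s 0 0‖ := by rw [h01 s, sub_zero]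
      _ ≤ K * (‖u s - 0‖ + ‖v s - 0‖) := hl1 s (u s) (v s) 0 0
      _ = K * (‖u s‖ + ‖v s‖) := by simp
      _ ≤ K * ((Nu + Nv) * Real.exp (-(β * s))) := by
          have h1 := key_u s hs; have h2 := key_v s hs
          have h3 : ‖u s‖ + ‖v s‖ ≤ (Nu + Nv) * Real.exp (-(β * s)) := by
            rw [add_mul]; exact add_le_add h1 h2
          exact mul_le_mul_of_nonneg_left h3 hK.le
  have hg2bd : ∀ s, 0 ≤ s → ‖Δg2 s (u s) (v s)‖ ≤ K * ((Nu + Nv) * Real.exp (-(β * s))) := by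
    intro s hs
    calc ‖Δg2 s (u s) (v s)‖ = ‖Δg2 s (u s) (v s) - Δg2 s 0 0‖ := by rw [h02 s, sub_zero]
      _ ≤ K * (‖u s - 0‖ + ‖v s - 0‖) := hl2 s (u s) (v s) 0 0
      _ = K * (‖u s‖ + ‖v s‖) := by simp
      _ ≤ K * ((Nu + Nv) * Real.exp (-(β * s))) := by
          have h1 := key_u s hs; have h2 := key_v s hs
          have h3 : ‖u s‖ + ‖v s‖ ≤ (Nu + Nv) * Real.exp (-(β * s)) := by
            rw [add_mul]; exact add_le_add h1 h2
          exact mul_le_mul_of_nonneg_left h3 hK.le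
  -- Step A : bound on u
  have stepA : ∀ t, 0 ≤ t →
      Real.exp (β * t) * ‖u t‖ ≤ ε * K / (γ + ε * γs) * (Nu + Nv) := by
    intro t ht
    obtain ⟨b, hbdef⟩ : ∃ x : ℝ, x = γs + β := ⟨_, rfl⟩
    have hbpos : 0 < b := by rw [hbdef]; positivity
    obtain ⟨C, hCdef⟩ : ∃ x : ℝ, x = K * (Nu + Nv) * Real.exp (γs * t) := ⟨_, rfl⟩
    have hC0 : 0 ≤ C := by
      rw [hCdef]
      exact mul_nonneg (mul_nonneg hK.le (by linarith)) (Real.exp_pos _).le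
    have hint : IntegrableOn (fun s => C * Real.exp (-b * s)) (Set.Ici t) := by
      rw [integrableOn_Ici_iff_integrableOn_Ioi]
      exact (exp_neg_integrableOn_Ioi t hbpos).const_mul C
    have hnorm : ‖u t‖ ≤ ∫ s in Set.Ici t, C * Real.exp (-b * s) := by
      rw [(hfp t ht).1, norm_neg]
      refine norm_integral_le_of_norm_le hint ?_
      filter_upwards [ae_restrict_mem measurableSet_Ici] with s hs
      have hts : t ≤ s := hs
      have hs0 : (0:ℝ) ≤ s := le_trans ht hts
      have h1 : ‖NormedSpace.exp ((t - s) • S) (Δg1 s (u s) (v s))‖ ≤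
          Real.exp (γs * (t - s)) * ‖Δg1 s (u s) (v s)‖ :=
        hS (t - s) (by linarith) _
      have h2 := hg1bd s hs0
      have hexp : Real.exp (γs * (t - s)) * Real.exp (-(β * s)) =
          Real.exp (γs * t) * Real.exp (-b * s) := by
        rw [← Real.exp_add, ← Real.exp_add]; congr 1; rw [hbdef]; ring
      calc ‖NormedSpace.exp ((t - s) • S) (Δg1 s (u s) (v s))‖
          ≤ Real.exp (γs * (t - s)) * ‖Δg1 s (u s) (v s)‖ := h1
        _ ≤ Real.exp (γs * (t - s)) * (K * ((Nu + Nv) * Real.exp (-(β * s)))) :=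
            mul_le_mul_of_nonneg_left h2 (Real.exp_pos _).le
        _ = K * (Nu + Nv) * (Real.exp (γs * (t - s)) * Real.exp (-(β * s))) := by ring
        _ = C * Real.exp (-b * s) := by rw [hexp, hCdef]; ring
    have hval : ∫ s in Set.Ici t, C * Real.exp (-b * s) = C * (Real.exp (-b * t) / b) := by
      rw [MeasureTheory.integral_Ici_eq_integral_Ioi, MeasureTheory.integral_const_mul,
        intExpIoi hbpos t]
    rw [hval] at hnorm
    have hexp1 : Real.exp (β * t) * (Real.exp (γs * t) * Real.exp (-b * t)) = 1 := by
      rw [← Real.exp_add, ← Real.exp_add]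
      have harg : β * t + (γs * t + -b * t) = 0 := by rw [hbdef]; ring
      rw [harg, Real.exp_zero]
    have hfinal : Real.exp (β * t) * ‖u t‖ ≤ K * (Nu + Nv) / b :=
      calc Real.exp (β * t) * ‖u t‖
          ≤ Real.exp (β * t) * (C * (Real.exp (-b * t) / b)) :=
            mul_le_mul_of_nonneg_left hnorm (Real.exp_pos _).le
        _ = K * (Nu + Nv) / b * (Real.exp (β * t) * (Real.exp (γs * t) * Real.exp (-b * t))) := by
            rw [hCdef]; ring
        _ = K * (Nu + Nv) / b := by rw [hexp1, mul_one]
    have heq : K * (Nu + Nv) / b = ε * K / (γ + ε * γs) * (Nu + Nv) := by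
      rw [hbdef, hβdef]; field_simp; ring
    linarith [hfinal]
  -- Step B : bound on v
  have stepB : ∀ t, 0 ≤ t →
      Real.exp (β * t) * ‖v t‖ ≤ ‖v 0‖ + -K / (γ + γf) * (Nu + Nv) := by
    intro t ht
    obtain ⟨c, hcdef⟩ : ∃ x : ℝ, x = -(γ + γf) / ε := ⟨_, rfl⟩
    have hcpos : 0 < c := by rw [hcdef]; exact div_pos (by linarith) hε
    obtain ⟨C, hCdef⟩ : ∃ x : ℝ, x = K * (Nu + Nv) * Real.exp (γf / ε * t) := ⟨_, rfl⟩
    have hC0 : 0 ≤ C := by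
      rw [hCdef]
      exact mul_nonneg (mul_nonneg hK.le (by linarith)) (Real.exp_pos _).le
    have hIbd : ‖∫ s in (0:ℝ)..t, NormedSpace.exp (((t - s) / ε) • F) (Δg2 s (u s) (v s))‖ ≤
        C * ((Real.exp (c * t) - 1) / c) := by
      have hgi : IntervalIntegrable (fun s => C * Real.exp (c * s)) volume 0 t :=
        (continuous_const.mul (Real.continuous_exp.comp
          (continuous_const.mul continuous_id))).intervalIntegrable 0 t
      have hbound := intervalIntegral.norm_integral_le_of_norm_le
        (f := fun s => NormedSpace.exp (((t - s) / ε) • F) (Δg2 s (u s) (v s)))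
        (g := fun s => C * Real.exp (c * s)) (μ := volume) (a := 0) (b := t) ht ?_ hgi
      · rw [intervalIntegral.integral_const_mul, intExpMul hcpos.ne' t] at hbound
        have hnn : 0 ≤ C * ((Real.exp (c * t) - 1) / c) := by
          have h1 : (1:ℝ) ≤ Real.exp (c * t) := Real.one_le_exp (by positivity)
          have h2 : 0 ≤ (Real.exp (c * t) - 1) / c := div_nonneg (by linarith) hcpos.le
          exact mul_nonneg hC0 h2
        exact hbound
      · filter_upwards with s hs
        obtain ⟨hs0, hst⟩ := hs
        have h1 : ‖NormedSpace.exp (((t - s) / ε) • F) (Δg2 s (u s) (v s))‖ ≤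
            Real.exp (γf * ((t - s) / ε)) * ‖Δg2 s (u s) (v s)‖ :=
          hF ((t - s) / ε) (div_nonneg (by linarith) hε.le) _
        have h2 := hg2bd s hs0.le
        have hexp : Real.exp (γf * ((t - s) / ε)) * Real.exp (-(β * s)) =
            Real.exp (γf / ε * t) * Real.exp (c * s) := by
          rw [← Real.exp_add, ← Real.exp_add]; congr 1
          rw [hcdef, hβdef]; field_simp; ring
        calc ‖NormedSpace.exp (((t - s) / ε) • F) (Δg2 s (u s) (v s))‖
            ≤ Real.exp (γf * ((t - s) / ε)) * ‖Δg2 s (u s) (v s)‖ := h1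
          _ ≤ Real.exp (γf * ((t - s) / ε)) * (K * ((Nu + Nv) * Real.exp (-(β * s)))) :=
              mul_le_mul_of_nonneg_left h2 (Real.exp_pos _).le
          _ = K * (Nu + Nv) * (Real.exp (γf * ((t - s) / ε)) * Real.exp (-(β * s))) := by ring
          _ = C * Real.exp (c * s) := by rw [hexp, hCdef]; ring
    have hvt := (hfp t ht).2
    have hv1 : ‖v t‖ ≤ Real.exp (γf * (t / ε)) * ‖v 0‖ +
        1 / ε * (C * ((Real.exp (c * t) - 1) / c)) := by
      rw [hvt]
      refine le_trans (norm_add_le _ _) (add_le_add ?_ ?_)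
      · exact hF (t / ε) (div_nonneg ht hε.le) (v 0)
      · rw [norm_smul, Real.norm_eq_abs, abs_of_pos (by positivity)]
        exact mul_le_mul_of_nonneg_left hIbd (by positivity)
    have hT1 : Real.exp (β * t) * (Real.exp (γf * (t / ε)) * ‖v 0‖) ≤ ‖v 0‖ := by
      rw [← mul_assoc, ← Real.exp_add]
      have harg : β * t + γf * (t / ε) ≤ 0 := by
        rw [hβdef]
        have heq2 : γ / ε * t + γf * (t / ε) = (γ + γf) * t / ε := by field_simp
        rw [heq2]
        have h1 : (γ + γf) * t ≤ 0 := mul_nonpos_of_nonpos_of_nonneg hγγf.le ht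
        exact div_nonpos_of_nonpos_of_nonneg h1 hε.le
      have h5 := Real.exp_le_one_iff.mpr harg
      nlinarith [norm_nonneg (v 0), Real.exp_pos (β * t + γf * (t / ε))]
    have hT2 : Real.exp (β * t) * (1 / ε * (C * ((Real.exp (c * t) - 1) / c))) ≤
        -K / (γ + γf) * (Nu + Nv) := by
      have h1 : Real.exp (β * t) * (1 / ε * (C * ((Real.exp (c * t) - 1) / c))) ≤
          Real.exp (β * t) * (1 / ε * (C * (Real.exp (c * t) / c))) := by
        have hin : (Real.exp (c * t) - 1) / c ≤ Real.exp (c * t) / c := by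
          gcongr
          linarith
        have h6 : C * ((Real.exp (c * t) - 1) / c) ≤ C * (Real.exp (c * t) / c) :=
          mul_le_mul_of_nonneg_left hin hC0
        have h7 : 1 / ε * (C * ((Real.exp (c * t) - 1) / c)) ≤
            1 / ε * (C * (Real.exp (c * t) / c)) :=
          mul_le_mul_of_nonneg_left h6 (by positivity)
        exact mul_le_mul_of_nonneg_left h7 (Real.exp_pos _).le
      have h3 : Real.exp (β * t) * (Real.exp (γf / ε * t) * Real.exp (c * t)) = 1 := by
        rw [← Real.exp_add, ← Real.exp_add]
        have harg : β * t + (γf / ε * t + c * t) = 0 := by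
          rw [hcdef, hβdef]; field_simp; ring
        rw [harg, Real.exp_zero]
      have h2 : Real.exp (β * t) * (1 / ε * (C * (Real.exp (c * t) / c))) =
          K * (Nu + Nv) / (ε * c) *
            (Real.exp (β * t) * (Real.exp (γf / ε * t) * Real.exp (c * t))) := by
        rw [hCdef]; ring
      have h4 : K * (Nu + Nv) / (ε * c) = -K / (γ + γf) * (Nu + Nv) := by
        have hec : ε * c = -(γ + γf) := by rw [hcdef]; field_simp
        have hne2 : -(γ + γf) ≠ 0 := neg_ne_zero.mpr hγγfne
        rw [hec, div_neg, mul_div_right_comm, neg_div, neg_mul]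
      calc Real.exp (β * t) * (1 / ε * (C * ((Real.exp (c * t) - 1) / c)))
          ≤ Real.exp (β * t) * (1 / ε * (C * (Real.exp (c * t) / c))) := h1
        _ = K * (Nu + Nv) / (ε * c) := by rw [h2, h3, mul_one]
        _ = -K / (γ + γf) * (Nu + Nv) := h4
    calc Real.exp (β * t) * ‖v t‖
        ≤ Real.exp (β * t) * (Real.exp (γf * (t / ε)) * ‖v 0‖ +
            1 / ε * (C * ((Real.exp (c * t) - 1) / c))) :=
          mul_le_mul_of_nonneg_left hv1 (Real.exp_pos _).le
      _ = Real.exp (β * t) * (Real.exp (γf * (t / ε)) * ‖v 0‖) +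
          Real.exp (β * t) * (1 / ε * (C * ((Real.exp (c * t) - 1) / c))) := by ring
      _ ≤ ‖v 0‖ + -K / (γ + γf) * (Nu + Nv) := add_le_add hT1 hT2
  -- sup-norm bounds
  have hNuB : Nu ≤ ε * K / (γ + ε * γs) * (Nu + Nv) := by
    conv_lhs => rw [hNuSup]
    refine ciSup_le fun t => ?_
    rw [hwarg t.1]
    exact stepA t.1 t.2
  have hNvB : Nv ≤ ‖v 0‖ + -K / (γ + γf) * (Nu + Nv) := by
    conv_lhs => rw [hNvSup]
    refine ciSup_le fun t => ?_
    rw [hwarg t.1]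
    exact stepB t.1 t.2
  have hρ1 : 0 < 1 - (ε * K / (γ + ε * γs) - K / (γ + γf)) := by linarith
  have hNbound : Nu + Nv ≤ ‖v 0‖ / (1 - (ε * K / (γ + ε * γs) - K / (γ + γf))) := by
    rw [le_div_iff₀ hρ1]
    have hr : (Nu + Nv) * (1 - (ε * K / (γ + ε * γs) - K / (γ + γf))) =
        (Nu + Nv) - (ε * K / (γ + ε * γs) * (Nu + Nv) + -K / (γ + γf) * (Nu + Nv)) := by
      ring
    linarith [hNuB, hNvB, hr.le, hr.ge]
  constructor
  · rw [← hNudef, ← hNvdef]; exact hNbound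
  · intro t ht
    have h1 := key_u t ht
    have h2 := key_v t ht
    have hexpeq : Real.exp (-(γ / ε) * t) = Real.exp (-(β * t)) := by rw [hβdef]; ring_nf
    calc ‖u t‖ + ‖v t‖ ≤ (Nu + Nv) * Real.exp (-(β * t)) := by
          rw [add_mul]; exact add_le_add h1 h2
      _ ≤ ‖v 0‖ / (1 - (ε * K / (γ + ε * γs) - K / (γ + γf))) * Real.exp (-(β * t)) :=
          mul_le_mul_of_nonneg_right hNbound (Real.exp_pos _).le
      _ = Real.exp (-(γ / ε) * t) *
          (‖v 0‖ / (1 - (ε * K / (γ + ε * γs) - K / (γ + γf)))) := by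
          rw [hexpeq]; ring
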